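/- For any x, ω ∈ ℝ³, the operator norm of K(x,ω) equals |x × ω| · |x|. -/

import Mathlib

open Matrix

noncomputable def K (x ω : Fin 3 → ℝ) : Matrix (Fin 3) (Fin 3) ℝ :=
  vecMulVec (crossProduct ω x) x + vecMulVec x (crossProduct ω x)

noncomputable def norm3 (v : Fin 3 → ℝ) : ℝ := Real.sqrt (v ⬝ᵥ v)

noncomputable def toE (v : Fin 3 → ℝ) : EuclideanSpace ℝ (Fin 3) :=
  (WithLp.equiv 2 (Fin 3 → ℝ)).symm v

lemma K_apply (x ω : Fin 3 → ℝ) (v : EuclideanSpace ℝ (Fin 3)) :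
    (Matrix.toEuclideanLin (K x ω)).toContinuousLinearMap v =
      (inner ℝ (toE x) v : ℝ) • toE (crossProduct ω x)
      + (inner ℝ (toE (crossProduct ω x)) v : ℝ) • toE x := by
  ext i
  simp [K, toE, Matrix.toEuclideanLin_apply, Matrix.add_mulVec, Matrix.mulVec, dotProduct,
    vecMulVec_apply, PiLp.inner_apply, Finset.sum_mul, Finset.mul_sum, mul_comm, mul_left_comm,
    mul_assoc]

lemma norm3_eq (v : Fin 3 → ℝ) : norm3 v = ‖toE v‖ := by
  rw [norm3, EuclideanSpace.norm_eq]
  congr 1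
  simp [dotProduct, toE, sq_abs, sq]

lemma orth (x ω : Fin 3 → ℝ) : (inner ℝ (toE (crossProduct ω x)) (toE x) : ℝ) = 0 := by
  have h := dot_cross_self ω x
  simpa [toE, PiLp.inner_apply, dotProduct, mul_comm] using h

lemma cross_neg_norm (x ω : Fin 3 → ℝ) : norm3 (crossProduct x ω) = norm3 (crossProduct ω x) := by
  have h : crossProduct x ω = -(crossProduct ω x) := by rw [cross_anticomm]
  rw [norm3_eq, norm3_eq, h]
  have : toE (-(crossProduct ω x)) = -(toE (crossProduct ω x)) := rfl
  rw [this, norm_neg]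

lemma key_ineq {E : Type*} [NormedAddCommGroup E] [InnerProductSpace ℝ E]
    (a b v : E) (hab : (inner ℝ a b : ℝ) = 0) (hA : 0 < ‖a‖) (hB : 0 < ‖b‖) :
    ‖a‖^2 * (inner ℝ b v : ℝ)^2 + ‖b‖^2 * (inner ℝ a v : ℝ)^2 ≤ ‖a‖^2 * ‖b‖^2 * ‖v‖^2 := by
  set p : ℝ := inner ℝ a v with hp
  set q : ℝ := inner ℝ b v with hq
  have h0 : (0:ℝ) ≤ inner ℝ ((‖a‖^2*‖b‖^2) • v - (‖b‖^2*p) • a - (‖a‖^2*q) • b)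
      ((‖a‖^2*‖b‖^2) • v - (‖b‖^2*p) • a - (‖a‖^2*q) • b) := real_inner_self_nonneg
  simp only [inner_sub_left, inner_sub_right, real_inner_smul_left, real_inner_smul_right,
    real_inner_self_eq_norm_sq, norm_smul, Real.norm_eq_abs, mul_pow, sq_abs] at h0
  have hba : (inner ℝ b a : ℝ) = 0 := by rw [real_inner_comm]; exact hab
  have hva : (inner ℝ v a : ℝ) = p := by rw [hp, real_inner_comm]
  have hvb : (inner ℝ v b : ℝ) = q := by rw [hq, real_inner_comm]
  rw [hba, hva, hvb, hab, ← hp, ← hq] at h0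
  nlinarith [h0, mul_pos (mul_pos hA hA) (mul_pos hB hB), sq_nonneg p, sq_nonneg q]

theorem K_opNorm (x ω : Fin 3 → ℝ) :
    ‖(Matrix.toEuclideanLin (K x ω)).toContinuousLinearMap‖ =
      norm3 (crossProduct x ω) * norm3 x := by
  rw [cross_neg_norm, norm3_eq, norm3_eq]
  set T := (Matrix.toEuclideanLin (K x ω)).toContinuousLinearMap with hT
  set a := toE (crossProduct ω x) with hart
  set b := toE x with hb
  have hab : (inner ℝ a b : ℝ) = 0 := orth x ω
  by_cases hzero : crossProduct ω x = 0
  · have ha0 : a = 0 := by rw [hart, hzero]; rfl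
    have hT0 : ∀ v, T v = 0 := by
      intro v
      rw [hT, K_apply, ← hart, ← hb, ha0]
      simp
    have : T = 0 := ContinuousLinearMap.ext fun v => hT0 v
    rw [this, ha0]
    simp
  · have hA : 0 < ‖a‖ := by
      rw [norm_pos_iff]
      intro h
      exact hzero (by simpa [hart, toE] using congrArg (WithLp.equiv 2 (Fin 3 → ℝ)) h)
    have hx : x ≠ 0 := by
      intro h
      apply hzero
      rw [h]
      exact LinearMap.map_zero (crossProduct ω)
    have hB : 0 < ‖b‖ := by
      rw [norm_pos_iff]
      intro h
      exact hx (by simpa [hb, toE] using congrArg (WithLp.equiv 2 (Fin 3 → ℝ)) h)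
    apply le_antisymm
    · apply ContinuousLinearMap.opNorm_le_bound _ (by positivity)
      intro v
      have hTv : T v = (inner ℝ b v : ℝ) • a + (inner ℝ a v : ℝ) • b := by
        rw [hT, K_apply, ← hart, ← hb]
      have hsq : ‖T v‖^2 ≤ (‖a‖ * ‖b‖ * ‖v‖)^2 := by
        rw [hTv, norm_add_sq_real]
        have h1 : (inner ℝ ((inner ℝ b v : ℝ) • a) ((inner ℝ a v : ℝ) • b) : ℝ) = 0 := by
          rw [real_inner_smul_left, real_inner_smul_right, hab]; ring
        rw [h1]
        have key := key_ineq a b v hab hA hB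
        simp only [norm_smul, Real.norm_eq_abs, mul_pow, sq_abs]
        nlinarith [key]
      calc ‖T v‖ = Real.sqrt (‖T v‖^2) := (Real.sqrt_sq (norm_nonneg _)).symm
        _ ≤ Real.sqrt ((‖a‖ * ‖b‖ * ‖v‖)^2) := Real.sqrt_le_sqrt hsq
        _ = ‖a‖ * ‖b‖ * ‖v‖ := Real.sqrt_sq (by positivity)
    · set v₀ : EuclideanSpace ℝ (Fin 3) := ‖b‖ • a + ‖a‖ • b with hv₀
      have hbv : (inner ℝ b v₀ : ℝ) = ‖a‖ * ‖b‖^2 := by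
        rw [hv₀, inner_add_right, real_inner_smul_right, real_inner_smul_right,
          real_inner_self_eq_norm_sq]
        have hba : (inner ℝ b a : ℝ) = 0 := by rw [real_inner_comm]; exact hab
        rw [hba]
        ring
      have hav : (inner ℝ a v₀ : ℝ) = ‖a‖^2 * ‖b‖ := by
        rw [hv₀, inner_add_right, real_inner_smul_right, real_inner_smul_right,
          real_inner_self_eq_norm_sq, hab]
        ring
      have hTv₀ : T v₀ = (‖a‖ * ‖b‖) • v₀ := by
        rw [hT, K_apply, ← hart, ← hb, hbv, hav, hv₀, smul_add, smul_smul, smul_smul]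
        module
      have hv₀ne : v₀ ≠ 0 := by
        intro h
        have : (inner ℝ a v₀ : ℝ) = 0 := by rw [h, inner_zero_right]
        rw [hav] at this
        have h2 : (0:ℝ) < ‖a‖^2 * ‖b‖ := by positivity
        exact absurd this (ne_of_gt h2)
      have hle := T.le_opNorm v₀
      rw [hTv₀, norm_smul, Real.norm_eq_abs, abs_of_pos (by positivity)] at hle
      have hv₀pos : 0 < ‖v₀‖ := norm_pos_iff.mpr hv₀ne
      exact le_of_mul_le_mul_right hle hv₀pos
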